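/- Let W be a continuous distance monoid, M a W-metric space, and p, q, r Cauchy sequences on M. Then d_C(p, r) ≤ d_C(p, q) + d_C(q, r). -/

import Mathlib

/-- A complete distance monoid: a commutative positively linearly ordered monoid whose
order is a complete linear order with least element `0`, and in which addition
distributes over infima. -/
class CompleteDistMonoid (W : Type*) extends AddCommMonoid W, CompleteLinearOrder W where
  bot_eq_zero : (⊥ : W) = 0
  add_le_add_left : ∀ a b : W, a ≤ b → ∀ c : W, c + a ≤ c + b
  add_le_add_right : ∀ a b : W, a ≤ b → ∀ c : W, a + c ≤ b + c
  add_sInf : ∀ (A : Set W) (b : W), b + sInf A = ⨅ a ∈ A, (a + b)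

/-- `W` is continuous at `0` if `0 = inf {a + b | a, b ∈ W⁺}` (where `W⁺ = W \ {0}`). -/
def ContinuousAtZero (W : Type*) [CompleteDistMonoid W] : Prop :=
  sInf {c : W | ∃ a b : W, a ≠ 0 ∧ b ≠ 0 ∧ c = a + b} = 0

/-- `d` is a `W`-metric on `M`. -/
def IsWMetric {W M : Type*} [CompleteDistMonoid W] (d : M → M → W) : Prop :=
  (∀ x y : M, max (d x y) (d y x) = 0 ↔ x = y) ∧
  ∀ x y z : M, d x z ≤ d x y + d y z

/-- `p : A → M` is a Cauchy sequence on `(M, d)`: `A ⊆ W⁺`, `inf {a + b | a, b ∈ A} = 0`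
and `d (p a) (p b) ≤ a + b`.  (Values of `p` outside `A` are irrelevant.) -/
def IsCauchySeqOn {W M : Type*} [CompleteDistMonoid W] (d : M → M → W)
    (A : Set W) (p : W → M) : Prop :=
  (∀ a ∈ A, a ≠ 0) ∧
  sInf {c : W | ∃ a ∈ A, ∃ b ∈ A, c = a + b} = 0 ∧
  ∀ a ∈ A, ∀ b ∈ A, d (p a) (p b) ≤ a + b

/-- The Cauchy sequence `p : A → M` converges to `x`. -/
def ConvergesTo {W M : Type*} [CompleteDistMonoid W] (d : M → M → W)
    (A : Set W) (p : W → M) (x : M) : Prop :=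
  (⨆ a ∈ {a : W | a ≠ 0}, ⨅ b ∈ {b ∈ A | b ≤ a}, d x (p b)) = 0 ∧
  (⨆ a ∈ {a : W | a ≠ 0}, ⨅ b ∈ {b ∈ A | b ≤ a}, d (p b) x) = 0

/-- `(M, d)` is Cauchy complete: every Cauchy sequence converges to some element. -/
def CauchyComplete {W M : Type*} [CompleteDistMonoid W] (d : M → M → W) : Prop :=
  ∀ (A : Set W) (p : W → M), IsCauchySeqOn d A p → ∃ x : M, ConvergesTo d A p x

/-- The distance `d_C` between two Cauchy sequences. -/
noncomputable def dC {W M : Type*} [CompleteDistMonoid W] (d : M → M → W)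
    (A : Set W) (p : W → M) (B : Set W) (q : W → M) : W :=
  ⨆ c ∈ {c : W | c ≠ 0}, ⨅ a ∈ {a ∈ A | a ≤ c}, ⨅ b ∈ {b ∈ B | b ≤ c}, d (p a) (q b)

/-- Equivalence of Cauchy sequences: `p ≡ q` iff `d_C(p,q) = 0` and `d_C(q,p) = 0`. -/
def CEquiv {W M : Type*} [CompleteDistMonoid W] (d : M → M → W)
    (A : Set W) (p : W → M) (B : Set W) (q : W → M) : Prop :=
  dC d A p B q = 0 ∧ dC d B q A p = 0

instance {W : Type*} [CompleteDistMonoid W] : CovariantClass W W (· + ·) (· ≤ ·) :=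
  ⟨fun c a b h => CompleteDistMonoid.add_le_add_left a b h c⟩

instance {W : Type*} [CompleteDistMonoid W] :
    CovariantClass W W (Function.swap (· + ·)) (· ≤ ·) :=
  ⟨fun c a b h => CompleteDistMonoid.add_le_add_right a b h c⟩

lemma add_biInf' {W : Type*} [CompleteDistMonoid W] {ι : Type*} (s : Set ι) (f : ι → W) (k : W) :
    k + (⨅ x ∈ s, f x) = ⨅ x ∈ s, (k + f x) := by
  have h := CompleteDistMonoid.add_sInf (f '' s) k
  rw [sInf_image] at h
  rw [h, iInf_image]
  exact iInf_congr fun x => iInf_congr fun _ => add_comm _ _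

lemma add_biInf₂' {W : Type*} [CompleteDistMonoid W] {ι κ : Type*} (s : Set ι) (t : Set κ)
    (f : ι → κ → W) (k : W) :
    k + (⨅ x ∈ s, ⨅ y ∈ t, f x y) = ⨅ x ∈ s, ⨅ y ∈ t, (k + f x y) := by
  rw [add_biInf']
  exact iInf_congr fun x => iInf_congr fun _ => add_biInf' _ _ _

lemma biInf₂_add' {W : Type*} [CompleteDistMonoid W] {ι κ : Type*} (s : Set ι) (t : Set κ)
    (f : ι → κ → W) (k : W) :
    (⨅ x ∈ s, ⨅ y ∈ t, (f x y + k)) = k + ⨅ x ∈ s, ⨅ y ∈ t, f x y := by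
  rw [add_biInf₂']
  exact iInf_congr fun x => iInf_congr fun _ => iInf_congr fun y =>
    iInf_congr fun _ => (add_comm _ _).symm

lemma min_ne_zero' {W : Type*} [CompleteDistMonoid W] {c u : W} (hc : c ≠ 0) (hu : u ≠ 0) :
    min c u ≠ 0 := by
  rcases le_total c u with h | h
  · rw [min_eq_left h]; exact hc
  · rw [min_eq_right h]; exact hu

/-- Triangle inequality for the distance `d_C` between Cauchy sequences. -/
theorem stmt6 {W M : Type*} [CompleteDistMonoid W] (hW : ContinuousAtZero W)
    (d : M → M → W) (hd : IsWMetric d)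
    (A B C : Set W) (p q r : W → M)
    (hp : IsCauchySeqOn d A p) (hq : IsCauchySeqOn d B q) (hr : IsCauchySeqOn d C r) :
    dC d A p C r ≤ dC d A p B q + dC d B q C r := by
  obtain ⟨hB0, hBinf, hBd⟩ := hq
  set D := dC d A p B q + dC d B q C r with hDdef
  have key : ∀ w ∈ {c : W | ∃ a b : W, a ≠ 0 ∧ b ≠ 0 ∧ c = a + b}, dC d A p C r ≤ w + D := by
    rintro w ⟨u, v, hu, hv, rfl⟩
    apply iSup₂_le
    intro c hc
    have hc : c ≠ 0 := hc
    have hc₁ : min c u ≠ 0 := min_ne_zero' hc hu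
    have hc₂ : min c v ≠ 0 := min_ne_zero' hc hv
    have hG : (⨅ a ∈ {a ∈ A | a ≤ min c u}, ⨅ b ∈ {b ∈ B | b ≤ min c u}, d (p a) (q b))
        ≤ dC d A p B q :=
      le_iSup₂ (f := fun c' (_ : c' ∈ {c : W | c ≠ 0}) =>
        ⨅ a ∈ {a ∈ A | a ≤ c'}, ⨅ b ∈ {b ∈ B | b ≤ c'}, d (p a) (q b)) (min c u) hc₁
    have hH : (⨅ b ∈ {b ∈ B | b ≤ min c v}, ⨅ e ∈ {e ∈ C | e ≤ min c v}, d (q b) (r e))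
        ≤ dC d B q C r :=
      le_iSup₂ (f := fun c' (_ : c' ∈ {c : W | c ≠ 0}) =>
        ⨅ b ∈ {b ∈ B | b ≤ c'}, ⨅ e ∈ {e ∈ C | e ≤ c'}, d (q b) (r e)) (min c v) hc₂
    calc (⨅ a ∈ {a ∈ A | a ≤ c}, ⨅ e ∈ {e ∈ C | e ≤ c}, d (p a) (r e))
        ≤ ⨅ a ∈ {a ∈ A | a ≤ min c u}, ⨅ b ∈ {b ∈ B | b ≤ min c u},
            ((u + v) + (d (p a) (q b) + (⨅ b' ∈ {b ∈ B | b ≤ min c v},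
              ⨅ e ∈ {e ∈ C | e ≤ min c v}, d (q b') (r e)))) := by
          refine le_iInf₂ fun a ha => le_iInf₂ fun b hb => ?_
          rw [add_biInf₂', add_biInf₂']
          refine le_iInf₂ fun b' hb' => le_iInf₂ fun e he => ?_
          obtain ⟨haA, hac⟩ := ha
          obtain ⟨hbB, hbc⟩ := hb
          obtain ⟨hb'B, hb'c⟩ := hb'
          obtain ⟨heC, hec⟩ := he
          refine le_trans (iInf₂_le_of_le a ⟨haA, le_trans hac (min_le_left _ _)⟩
            (iInf₂_le e ⟨heC, le_trans hec (min_le_left _ _)⟩)) ?_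
          have h1 : d (p a) (r e) ≤ d (p a) (q b) + (d (q b) (q b') + d (q b') (r e)) :=
            le_trans (hd.2 _ _ _) (add_le_add_right (hd.2 _ _ _) _)
          have h2 : d (q b) (q b') ≤ u + v :=
            le_trans (hBd b hbB b' hb'B)
              (add_le_add (le_trans hbc (min_le_right _ _)) (le_trans hb'c (min_le_right _ _)))
          calc d (p a) (r e) ≤ d (p a) (q b) + ((u + v) + d (q b') (r e)) :=
                le_trans h1 (add_le_add_right (add_le_add_left h2 _) _)
            _ = (u + v) + (d (p a) (q b) + d (q b') (r e)) := add_left_comm _ _ _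
      _ = (u + v) + ((⨅ b' ∈ {b ∈ B | b ≤ min c v}, ⨅ e ∈ {e ∈ C | e ≤ min c v},
            d (q b') (r e)) + (⨅ a ∈ {a ∈ A | a ≤ min c u}, ⨅ b ∈ {b ∈ B | b ≤ min c u},
            d (p a) (q b))) := by
          rw [← add_biInf₂', biInf₂_add']
      _ ≤ (u + v) + D := by
          rw [hDdef]
          exact add_le_add_right (le_trans (add_le_add hH hG) (le_of_eq (add_comm _ _))) _
  have h2 : dC d A p C r ≤ ⨅ w ∈ {c : W | ∃ a b : W, a ≠ 0 ∧ b ≠ 0 ∧ c = a + b}, (w + D) :=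
    le_iInf₂ key
  rw [← CompleteDistMonoid.add_sInf, hW, add_zero] at h2
  exact h2
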